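/- arXiv:2602.19859 — 2 statements merged into one kernel-verified Lean document; each statement's English description precedes it below -/
import Mathlib

section
/- Let ξ = (ξ_1,…,ξ_p) ~ Dirichlet(α,…,α) and λ > 0 independent of ξ with finite second moment. For k ≠ l, Cov(λξ_k, λξ_l) is negative if Var(λ)/E[λ]² < 1/(pα), zero if Var(λ)/E[λ]² = 1/(pα), and positive if Var(λ)/E[λ]² > 1/(pα). -/
open MeasureTheory ProbabilityTheory

/-- Sign of the covariance of `λ ξ_k` and `λ ξ_l` is governed by the squared
coefficient of variation of `λ` relative to the threshold `1/(pα)`. -/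
theorem dirichlet_scale_cov_sign
    {Ω : Type*} [MeasurableSpace Ω] (μ : Measure Ω) [IsProbabilityMeasure μ]
    (p : ℕ) (hp : 2 ≤ p) (α : ℝ) (hα : 0 < α)
    (lam : Ω → ℝ) (ξ : Ω → Fin p → ℝ)
    (hlam_pos : ∀ ω, 0 < lam ω)
    (hlam_int : Integrable lam μ)
    (hlam_mean_pos : 0 < ∫ ω, lam ω ∂μ)
    (hlam_sq : Integrable (fun ω => lam ω ^ 2) μ)
    (hindep : IndepFun lam ξ μ)
    (hsimplex : ∀ ω, ∑ k, ξ ω k = 1)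
    (hmean : ∀ k, ∫ ω, ξ ω k ∂μ = 1 / p)
    (hcovξ : ∀ k l, k ≠ l →
      (∫ ω, ξ ω k * ξ ω l ∂μ) - (∫ ω, ξ ω k ∂μ) * (∫ ω, ξ ω l ∂μ)
        = -(1 / ((p : ℝ) ^ 2 * ((p : ℝ) * α + 1))))
    (k l : Fin p) (hkl : k ≠ l) :
    ((((∫ ω, lam ω ^ 2 ∂μ) - (∫ ω, lam ω ∂μ) ^ 2) / (∫ ω, lam ω ∂μ) ^ 2
        < 1 / ((p : ℝ) * α)) →
      (∫ ω, (lam ω * ξ ω k) * (lam ω * ξ ω l) ∂μ)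
        - (∫ ω, lam ω * ξ ω k ∂μ) * (∫ ω, lam ω * ξ ω l ∂μ) < 0) ∧
    ((((∫ ω, lam ω ^ 2 ∂μ) - (∫ ω, lam ω ∂μ) ^ 2) / (∫ ω, lam ω ∂μ) ^ 2
        = 1 / ((p : ℝ) * α)) →
      (∫ ω, (lam ω * ξ ω k) * (lam ω * ξ ω l) ∂μ)
        - (∫ ω, lam ω * ξ ω k ∂μ) * (∫ ω, lam ω * ξ ω l ∂μ) = 0) ∧
    ((1 / ((p : ℝ) * α)
        < ((∫ ω, lam ω ^ 2 ∂μ) - (∫ ω, lam ω ∂μ) ^ 2) / (∫ ω, lam ω ∂μ) ^ 2) →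
      0 < (∫ ω, (lam ω * ξ ω k) * (lam ω * ξ ω l) ∂μ)
        - (∫ ω, lam ω * ξ ω k ∂μ) * (∫ ω, lam ω * ξ ω l ∂μ)) := by
  have hpR : (0:ℝ) < p := by positivity
  have hpα : (0:ℝ) < (p:ℝ) * α := by positivity
  have hpα1 : (0:ℝ) < (p:ℝ) * α + 1 := by linarith
  set A := ∫ ω, lam ω ∂μ with hA
  set B := ∫ ω, lam ω ^ 2 ∂μ with hB
  -- value of E[ξ_k ξ_l]
  have hprod_val : ∫ ω, ξ ω k * ξ ω l ∂μ
      = 1 / (p:ℝ)^2 - 1 / ((p:ℝ)^2 * ((p:ℝ)*α + 1)) := by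
    have h := hcovξ k l hkl
    rw [hmean k, hmean l] at h
    have : (1:ℝ)/p * (1/p) = 1/(p:ℝ)^2 := by field_simp
    linarith [h, this]
  have hprod_pos : (0:ℝ) < 1 / (p:ℝ)^2 - 1 / ((p:ℝ)^2 * ((p:ℝ)*α + 1)) := by
    rw [sub_pos, div_lt_div_iff₀ (by positivity) (by positivity)]
    nlinarith [mul_pos (mul_pos hpR hpR) hpα]
  -- integrability of ξ_k, ξ_l, ξ_k * ξ_l
  have hint_k : Integrable (fun ω => ξ ω k) μ := by
    by_contra h
    have h0 := hmean k
    rw [integral_undef h] at h0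
    have : (0:ℝ) < 1 / (p:ℝ) := by positivity
    linarith
  have hint_l : Integrable (fun ω => ξ ω l) μ := by
    by_contra h
    have h0 := hmean l
    rw [integral_undef h] at h0
    have : (0:ℝ) < 1 / (p:ℝ) := by positivity
    linarith
  have hint_kl : Integrable (fun ω => ξ ω k * ξ ω l) μ := by
    by_contra h
    rw [integral_undef h] at hprod_val
    linarith
  -- independence consequences
  have hik : IndepFun lam (fun ω => ξ ω k) μ :=
    hindep.comp measurable_id (measurable_pi_apply k)
  have hil : IndepFun lam (fun ω => ξ ω l) μ :=
    hindep.comp measurable_id (measurable_pi_apply l)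
  have hikl : IndepFun (fun ω => lam ω ^ 2) (fun ω => ξ ω k * ξ ω l) μ :=
    hindep.comp (measurable_id.pow_const 2)
      ((measurable_pi_apply k).mul (measurable_pi_apply l))
  have hmk : ∫ ω, lam ω * ξ ω k ∂μ = A * (1 / (p:ℝ)) := by
    have := hik.integral_fun_mul_eq_mul_integral hlam_int.aestronglyMeasurable hint_k.aestronglyMeasurable
    simpa [hmean k] using this
  have hml : ∫ ω, lam ω * ξ ω l ∂μ = A * (1 / (p:ℝ)) := by
    have := hil.integral_fun_mul_eq_mul_integral hlam_int.aestronglyMeasurable hint_l.aestronglyMeasurable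
    simpa [hmean l] using this
  have hmkl : ∫ ω, (lam ω * ξ ω k) * (lam ω * ξ ω l) ∂μ
      = B * (1 / (p:ℝ)^2 - 1 / ((p:ℝ)^2 * ((p:ℝ)*α + 1))) := by
    have h1 : ∫ ω, (lam ω * ξ ω k) * (lam ω * ξ ω l) ∂μ
        = ∫ ω, lam ω ^ 2 * (ξ ω k * ξ ω l) ∂μ := by
      refine integral_congr_ae (Filter.Eventually.of_forall fun ω => ?_)
      ring
    have h2 := hikl.integral_fun_mul_eq_mul_integral hlam_sq.aestronglyMeasurable hint_kl.aestronglyMeasurable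
    rw [h1]
    simpa [hprod_val] using h2
  have hA2 : (0:ℝ) < A ^ 2 := by positivity
  -- key factorization of the covariance
  have key : (∫ ω, (lam ω * ξ ω k) * (lam ω * ξ ω l) ∂μ)
      - (∫ ω, lam ω * ξ ω k ∂μ) * (∫ ω, lam ω * ξ ω l ∂μ)
      = (A ^ 2 * ((p:ℝ) * α) / ((p:ℝ) ^ 2 * ((p:ℝ) * α + 1)))
        * ((B - A ^ 2) / A ^ 2 - 1 / ((p:ℝ) * α)) := by
    rw [hmk, hml, hmkl]
    field_simp
    ring
  have hK : (0:ℝ) < A ^ 2 * ((p:ℝ) * α) / ((p:ℝ) ^ 2 * ((p:ℝ) * α + 1)) := by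
    positivity
  refine ⟨fun h => ?_, fun h => ?_, fun h => ?_⟩
  · rw [key]
    exact mul_neg_of_pos_of_neg hK (by linarith)
  · rw [key, h, sub_self, mul_zero]
  · rw [key]
    exact mul_pos hK (by linarith)
end

section
/- Let z > 0 and let λ ~ C⁺(0,1) be half-Cauchy distributed. Then κ = 1/(1 + z²λ²) has density p(κ) = (1/π) · z / ((z² − 1)κ + 1) · 1/(√κ √(1−κ)) on (0,1), with E[κ] = 1/(1+z) and Var(κ) = z/(2(1+z)²). -/
open MeasureTheory

/-- The half-Cauchy measure `C⁺(0,1)`: density `2/(π(1+λ²))` on `λ > 0`. -/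
noncomputable def halfCauchy : Measure ℝ :=
  volume.withDensity (fun l => ENNReal.ofReal
    (if 0 < l then 2 / (Real.pi * (1 + l ^ 2)) else 0))

section AuxHC

open Real Set Filter

private lemma hc_measurable_f (z : ℝ) :
    Measurable (fun l : ℝ => 1 / (1 + z ^ 2 * l ^ 2)) := by fun_prop

private lemma hc_myCV {s : Set ℝ} {f f' : ℝ → ℝ}
    (hs : MeasurableSet s) (hf' : ∀ x ∈ s, HasDerivWithinAt f (f' x) s x)
    (hf : Set.InjOn f s) (g : ℝ → ENNReal) :
    ∫⁻ x in f '' s, g x = ∫⁻ x in s, ENNReal.ofReal |f' x| * g (f x) := by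
  simpa only [ContinuousLinearMap.det_toSpanSingleton] using
    MeasureTheory.lintegral_image_eq_lintegral_abs_det_fderiv_mul volume hs
      (fun x hx => (hf' x hx).hasFDerivWithinAt) hf g

private lemma hc_hasDerivAt_g {z : ℝ} (hz : 0 < z) {κ : ℝ} (h0 : 0 < κ) (h1 : κ < 1) :
    HasDerivAt (fun κ : ℝ => Real.sqrt ((1 - κ) / (z ^ 2 * κ)))
      (-(1 / (2 * z ^ 2 * κ ^ 2 * Real.sqrt ((1 - κ) / (z ^ 2 * κ))))) κ := by
  have hzκ : (0:ℝ) < z ^ 2 * κ := by positivity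
  have hupos : 0 < (1 - κ) / (z ^ 2 * κ) := div_pos (by linarith) hzκ
  have hu : HasDerivAt (fun κ : ℝ => (1 - κ) / (z ^ 2 * κ)) (-(1 / (z ^ 2 * κ ^ 2))) κ := by
    have h := HasDerivAt.div (c := fun κ : ℝ => 1 - κ) (d := fun κ : ℝ => z ^ 2 * κ)
      (c' := -1) (d' := z ^ 2)
      (by simpa using (hasDerivAt_id κ).const_sub 1)
      (by simpa using (hasDerivAt_id κ).const_mul (z ^ 2)) (ne_of_gt hzκ)
    refine h.congr_deriv ?_
    field_simp
    ring
  have h := (Real.hasDerivAt_sqrt (ne_of_gt hupos)).comp κ hu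
  refine h.congr_deriv ?_
  field_simp

private lemma hc_sqrt_u_eq {z : ℝ} (hz : 0 < z) {κ : ℝ} (h1 : κ < 1) :
    Real.sqrt ((1 - κ) / (z ^ 2 * κ)) = Real.sqrt (1 - κ) / (z * Real.sqrt κ) := by
  rw [Real.sqrt_div (by linarith), Real.sqrt_mul (sq_nonneg z), Real.sqrt_sq hz.le]

private lemma hc_density_eq {z : ℝ} (hz : 0 < z) {κ : ℝ} (h0 : 0 < κ) (h1 : κ < 1) :
    |(-(1 / (2 * z ^ 2 * κ ^ 2 * Real.sqrt ((1 - κ) / (z ^ 2 * κ)))))| *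
      (2 / (Real.pi * (1 + (Real.sqrt ((1 - κ) / (z ^ 2 * κ))) ^ 2)))
      = (1 / Real.pi) * z / ((z ^ 2 - 1) * κ + 1)
          * (1 / (Real.sqrt κ * Real.sqrt (1 - κ))) := by
  have hzκ : (0:ℝ) < z ^ 2 * κ := by positivity
  have hupos : 0 < (1 - κ) / (z ^ 2 * κ) := div_pos (by linarith) hzκ
  have hs0 : 0 < Real.sqrt κ := Real.sqrt_pos.2 h0
  have hs1 : 0 < Real.sqrt (1 - κ) := Real.sqrt_pos.2 (by linarith)
  have e0 : Real.sqrt κ ^ 2 = κ := Real.sq_sqrt h0.le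
  have e1 : Real.sqrt (1 - κ) ^ 2 = 1 - κ := Real.sq_sqrt (by linarith)
  have hD : (0:ℝ) < (z ^ 2 - 1) * κ + 1 := by nlinarith
  have hπ : (0:ℝ) < Real.pi := Real.pi_pos
  have hDne := hD.ne'
  have hπne := hπ.ne'
  have hs0ne := hs0.ne'
  have hs1ne := hs1.ne'
  have hzne := hz.ne'
  have h0ne := h0.ne'
  rw [Real.sq_sqrt hupos.le, hc_sqrt_u_eq hz h1, abs_neg, abs_of_nonneg (by positivity)]
  have hA : 1 + (1 - κ) / (z ^ 2 * κ) = ((z ^ 2 - 1) * κ + 1) / (z ^ 2 * κ) := by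
    field_simp; ring
  rw [hA]
  field_simp
  ring_nf
  rw [e0]

private lemma hc_fg_eq {z : ℝ} (hz : 0 < z) {κ : ℝ} (h0 : 0 < κ) (h1 : κ < 1) :
    1 / (1 + z ^ 2 * (Real.sqrt ((1 - κ) / (z ^ 2 * κ))) ^ 2) = κ := by
  have hzκ : (0:ℝ) < z ^ 2 * κ := by positivity
  have hupos : 0 < (1 - κ) / (z ^ 2 * κ) := div_pos (by linarith) hzκ
  rw [Real.sq_sqrt hupos.le]
  field_simp
  ring

private lemma hc_preimage_eq {z : ℝ} (hz : 0 < z) (s : Set ℝ) :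
    (fun l : ℝ => 1 / (1 + z ^ 2 * l ^ 2)) ⁻¹' s ∩ Ioi 0
      = (fun κ : ℝ => Real.sqrt ((1 - κ) / (z ^ 2 * κ))) '' (s ∩ Ioo 0 1) := by
  ext l
  constructor
  · rintro ⟨hfl, hl⟩
    have hl0 : (0:ℝ) < l := hl
    have hden : (0:ℝ) < 1 + z ^ 2 * l ^ 2 := by positivity
    refine ⟨1 / (1 + z ^ 2 * l ^ 2), ⟨hfl, by positivity, ?_⟩, ?_⟩
    · rw [div_lt_one hden]; have : 0 < z ^ 2 * l ^ 2 := by positivity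
      linarith
    · have key : (1 - 1 / (1 + z ^ 2 * l ^ 2)) / (z ^ 2 * (1 / (1 + z ^ 2 * l ^ 2))) = l ^ 2 := by
        field_simp
        ring
      show Real.sqrt ((1 - 1 / (1 + z ^ 2 * l ^ 2)) / (z ^ 2 * (1 / (1 + z ^ 2 * l ^ 2)))) = l
      rw [key, Real.sqrt_sq hl0.le]
  · rintro ⟨κ, ⟨hκs, hκ0, hκ1⟩, rfl⟩
    have hzκ : (0:ℝ) < z ^ 2 * κ := by positivity
    have hupos : 0 < (1 - κ) / (z ^ 2 * κ) := div_pos (by linarith) hzκ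
    refine ⟨?_, Real.sqrt_pos.2 hupos⟩
    show 1 / (1 + z ^ 2 * (Real.sqrt ((1 - κ) / (z ^ 2 * κ))) ^ 2) ∈ s
    rw [hc_fg_eq hz hκ0 hκ1]
    exact hκs

private theorem hc_part1 (z : ℝ) (hz : 0 < z) :
    Measure.map (fun l : ℝ => 1 / (1 + z ^ 2 * l ^ 2)) halfCauchy
      = volume.withDensity (fun κ => ENNReal.ofReal
          (if κ ∈ Set.Ioo (0 : ℝ) 1 then
            (1 / Real.pi) * z / ((z ^ 2 - 1) * κ + 1)
              * (1 / (Real.sqrt κ * Real.sqrt (1 - κ)))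
          else 0)) := by
  ext s hs
  rw [Measure.map_apply (hc_measurable_f z) hs, halfCauchy,
    withDensity_apply _ ((hc_measurable_f z) hs), withDensity_apply _ hs]
  have injg : Set.InjOn (fun κ : ℝ => Real.sqrt ((1 - κ) / (z ^ 2 * κ))) (s ∩ Ioo 0 1) := by
    intro a ha b hb hab
    have : 1 / (1 + z ^ 2 * (Real.sqrt ((1 - a) / (z ^ 2 * a))) ^ 2)
        = 1 / (1 + z ^ 2 * (Real.sqrt ((1 - b) / (z ^ 2 * b))) ^ 2) := by
      simp only at hab; rw [hab]
    rwa [hc_fg_eq hz ha.2.1 ha.2.2, hc_fg_eq hz hb.2.1 hb.2.2] at this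
  calc ∫⁻ l in (fun l : ℝ => 1 / (1 + z ^ 2 * l ^ 2)) ⁻¹' s,
        ENNReal.ofReal (if 0 < l then 2 / (Real.pi * (1 + l ^ 2)) else 0)
      = ∫⁻ l in (fun l : ℝ => 1 / (1 + z ^ 2 * l ^ 2)) ⁻¹' s,
          (Ioi (0:ℝ)).indicator (fun l => ENNReal.ofReal (2 / (Real.pi * (1 + l ^ 2)))) l := by
        apply lintegral_congr
        intro l
        by_cases h : 0 < l <;> simp [Set.indicator_apply, Set.mem_Ioi, h]
    _ = ∫⁻ l in (fun l : ℝ => 1 / (1 + z ^ 2 * l ^ 2)) ⁻¹' s ∩ Ioi 0,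
          ENNReal.ofReal (2 / (Real.pi * (1 + l ^ 2))) := by
        rw [lintegral_indicator measurableSet_Ioi,
          Measure.restrict_restrict measurableSet_Ioi, Set.inter_comm]
    _ = ∫⁻ l in (fun κ : ℝ => Real.sqrt ((1 - κ) / (z ^ 2 * κ))) '' (s ∩ Ioo 0 1),
          ENNReal.ofReal (2 / (Real.pi * (1 + l ^ 2))) := by rw [hc_preimage_eq hz s]
    _ = ∫⁻ κ in s ∩ Ioo 0 1,
          ENNReal.ofReal |(-(1 / (2 * z ^ 2 * κ ^ 2 * Real.sqrt ((1 - κ) / (z ^ 2 * κ)))))|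
            * ENNReal.ofReal (2 / (Real.pi * (1 + (Real.sqrt ((1 - κ) / (z ^ 2 * κ))) ^ 2))) := by
        exact hc_myCV (hs.inter measurableSet_Ioo)
          (fun κ hκ => (hc_hasDerivAt_g hz hκ.2.1 hκ.2.2).hasDerivWithinAt) injg _
    _ = ∫⁻ κ in s ∩ Ioo 0 1, ENNReal.ofReal
          ((1 / Real.pi) * z / ((z ^ 2 - 1) * κ + 1)
            * (1 / (Real.sqrt κ * Real.sqrt (1 - κ)))) := by
        apply setLIntegral_congr_fun (hs.inter measurableSet_Ioo)
        intro κ hκ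
        beta_reduce
        rw [← ENNReal.ofReal_mul (abs_nonneg _), hc_density_eq hz hκ.2.1 hκ.2.2]
    _ = ∫⁻ κ in s, ENNReal.ofReal
          (if κ ∈ Set.Ioo (0 : ℝ) 1 then
            (1 / Real.pi) * z / ((z ^ 2 - 1) * κ + 1)
              * (1 / (Real.sqrt κ * Real.sqrt (1 - κ)))
          else 0) := by
        rw [show ∫⁻ κ in s, ENNReal.ofReal
            (if κ ∈ Set.Ioo (0 : ℝ) 1 then
              (1 / Real.pi) * z / ((z ^ 2 - 1) * κ + 1)
                * (1 / (Real.sqrt κ * Real.sqrt (1 - κ)))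
            else 0)
          = ∫⁻ κ in s, (Ioo (0:ℝ) 1).indicator (fun κ => ENNReal.ofReal
              ((1 / Real.pi) * z / ((z ^ 2 - 1) * κ + 1)
                * (1 / (Real.sqrt κ * Real.sqrt (1 - κ))))) κ from
            lintegral_congr fun κ => by
              by_cases h : κ ∈ Ioo (0:ℝ) 1 <;> simp [Set.indicator_apply, h],
          lintegral_indicator measurableSet_Ioo,
          Measure.restrict_restrict measurableSet_Ioo, Set.inter_comm]

private lemma hc_moment_eq (z : ℝ) (φ : ℝ → ℝ) (hφ : Measurable φ) :
    ∫ κ, φ κ ∂(Measure.map (fun l : ℝ => 1 / (1 + z ^ 2 * l ^ 2)) halfCauchy)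
      = ∫ l in Ioi (0:ℝ), (2 / (Real.pi * (1 + l ^ 2))) * φ (1 / (1 + z ^ 2 * l ^ 2)) := by
  rw [integral_map (hc_measurable_f z).aemeasurable (hφ.aestronglyMeasurable)]
  unfold halfCauchy
  rw [show (fun l : ℝ => ENNReal.ofReal (if 0 < l then 2 / (Real.pi * (1 + l ^ 2)) else 0))
      = (fun l : ℝ => ((Real.toNNReal
          (if 0 < l then 2 / (Real.pi * (1 + l ^ 2)) else 0) : NNReal) : ENNReal)) from rfl]
  have hd : Measurable (fun l : ℝ =>
      Real.toNNReal (if 0 < l then 2 / (Real.pi * (1 + l ^ 2)) else 0)) := by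
    apply measurable_real_toNNReal.comp
    apply Measurable.ite measurableSet_Ioi _ measurable_const
    fun_prop
  rw [integral_withDensity_eq_integral_smul hd _]
  have : ∀ l : ℝ, (Real.toNNReal (if 0 < l then 2 / (Real.pi * (1 + l ^ 2)) else 0))
        • φ (1 / (1 + z ^ 2 * l ^ 2))
      = (Ioi (0:ℝ)).indicator
          (fun l => (2 / (Real.pi * (1 + l ^ 2))) * φ (1 / (1 + z ^ 2 * l ^ 2))) l := by
    intro l
    by_cases h : 0 < l
    · have hpos : (0:ℝ) ≤ 2 / (Real.pi * (1 + l ^ 2)) := by positivity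
      simp [Set.indicator_apply, Set.mem_Ioi, h, NNReal.smul_def, Real.coe_toNNReal _ hpos]
    · simp [Set.indicator_apply, Set.mem_Ioi, h]
  simp_rw [this]
  rw [integral_indicator measurableSet_Ioi]

private lemma hc_integrableOn_aux (z : ℝ) (hz : 0 < z) (n : ℕ) :
    IntegrableOn (fun l : ℝ => 1 / ((1 + l ^ 2) * (1 + z ^ 2 * l ^ 2) ^ n)) (Ioi 0) := by
  apply Integrable.mono (integrable_inv_one_add_sq.integrableOn (s := Ioi 0))
  · exact (continuous_const.div (by fun_prop) (fun l => by positivity)).aestronglyMeasurable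
  · filter_upwards with l
    have h1 : (0:ℝ) < 1 + l ^ 2 := by positivity
    have h2 : (1:ℝ) ≤ (1 + z ^ 2 * l ^ 2) ^ n :=
      one_le_pow₀ (by nlinarith [sq_nonneg (z*l)])
    rw [Real.norm_eq_abs, Real.norm_eq_abs, abs_of_nonneg (by positivity),
      abs_of_nonneg (by positivity), one_div]
    exact inv_anti₀ h1 (le_mul_of_one_le_right h1.le h2)

private lemma hc_tendsto_arctan_mul (z : ℝ) (hz : 0 < z) :
    Tendsto (fun l : ℝ => Real.arctan (z * l)) atTop (nhds (Real.pi/2)) :=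
  (Real.tendsto_arctan_atTop.mono_right nhdsWithin_le_nhds).comp
    (Filter.tendsto_id.const_mul_atTop hz)

private lemma hc_tendsto_frac (z : ℝ) (hz : 0 < z) (n : ℕ) (hn : 1 ≤ n) :
    Tendsto (fun l : ℝ => l / (1 + z ^ 2 * l ^ 2) ^ n) atTop (nhds 0) := by
  apply tendsto_of_tendsto_of_tendsto_of_le_of_le' tendsto_const_nhds
    (h := fun l : ℝ => 1 / (z ^ 2 * l))
  · have : Tendsto (fun l : ℝ => z ^ 2 * l) atTop atTop :=
      Filter.tendsto_id.const_mul_atTop (by positivity)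
    have h := this.inv_tendsto_atTop
    apply h.congr
    intro l
    simp [one_div, mul_inv, mul_comm]
  · filter_upwards [eventually_ge_atTop (0:ℝ)] with l hl
    positivity
  · filter_upwards [eventually_gt_atTop (0:ℝ)] with l hl
    have hb : z ^ 2 * l ^ 2 ≤ (1 + z ^ 2 * l ^ 2) ^ n := by
      calc z ^ 2 * l ^ 2 ≤ 1 + z ^ 2 * l ^ 2 := by linarith
      _ ≤ (1 + z ^ 2 * l ^ 2) ^ n := le_self_pow₀ (by nlinarith [sq_nonneg (z*l)]) (by omega)
    rw [div_le_div_iff₀ (by positivity) (by positivity)]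
    nlinarith [hb]

private lemma hc_hasDerivAt_arctan_mul (z x : ℝ) :
    HasDerivAt (fun l : ℝ => Real.arctan (z * l)) (z / (1 + z ^ 2 * x ^ 2)) x := by
  have h := (Real.hasDerivAt_arctan (z * x)).comp x ((hasDerivAt_id x).const_mul z)
  refine h.congr_deriv ?_
  simp [mul_pow]
  ring

private lemma hc_hasDerivAt_quot (z x : ℝ) (n : ℕ) :
    HasDerivAt (fun l : ℝ => l / (1 + z ^ 2 * l ^ 2) ^ n)
      ((1 * (1 + z ^ 2 * x ^ 2) ^ n
          - x * (n * (1 + z ^ 2 * x ^ 2) ^ (n - 1) * (z ^ 2 * (2 * x))))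
        / ((1 + z ^ 2 * x ^ 2) ^ n) ^ 2) x := by
  have hden : (0:ℝ) < 1 + z ^ 2 * x ^ 2 := by positivity
  have hq : HasDerivAt (fun l : ℝ => 1 + z ^ 2 * l ^ 2) (z ^ 2 * (2 * x)) x := by
    simpa [mul_comm, mul_assoc] using ((hasDerivAt_pow 2 x).const_mul (z ^ 2)).const_add 1
  have hqn := hq.pow n
  have h := (hasDerivAt_id x).div hqn (pow_ne_zero n hden.ne')
  exact h

private lemma hc_I1 (z : ℝ) (hz : 0 < z) :
    ∫ l in Ioi (0:ℝ), 1 / ((1 + l ^ 2) * (1 + z ^ 2 * l ^ 2)) = Real.pi / (2 * (1 + z)) := by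
  rcases eq_or_ne z 1 with rfl | hz1
  · have hderiv : ∀ x ∈ Ici (0:ℝ),
        HasDerivAt (fun l : ℝ => (Real.arctan l + l / (1 + l ^ 2)) / 2)
          (1 / ((1 + x ^ 2) * (1 + 1 ^ 2 * x ^ 2))) x := by
      intro x _
      have hden : (0:ℝ) < 1 + x ^ 2 := by positivity
      have h1 : HasDerivAt (fun l : ℝ => l / (1 + l ^ 2))
          ((1 * (1 + x ^ 2) - x * (2 * x)) / (1 + x ^ 2) ^ 2) x := by
        exact (hasDerivAt_id x).div
          (by simpa using (hasDerivAt_pow 2 x).const_add 1) hden.ne'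
      have h := ((Real.hasDerivAt_arctan x).add h1).div_const 2
      refine h.congr_deriv ?_
      field_simp
      ring
    have htends : Tendsto (fun l : ℝ => (Real.arctan l + l / (1 + l ^ 2)) / 2) atTop
        (nhds ((Real.pi / 2 + 0) / 2)) := by
      apply Tendsto.div_const
      apply Tendsto.add (Real.tendsto_arctan_atTop.mono_right nhdsWithin_le_nhds)
      simpa using hc_tendsto_frac 1 one_pos 1 le_rfl
    have := integral_Ioi_of_hasDerivAt_of_tendsto' hderiv
      (by simpa using hc_integrableOn_aux 1 one_pos 1) htends
    rw [this]
    norm_num [Real.arctan_zero]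
    ring
  · set A : ℝ := 1 / (1 - z ^ 2) with hA
    have hz2 : (1:ℝ) - z ^ 2 ≠ 0 := by
      intro h
      apply hz1
      nlinarith
    have hderiv : ∀ x ∈ Ici (0:ℝ),
        HasDerivAt (fun l : ℝ => A * (Real.arctan l - z * Real.arctan (z * l)))
          (1 / ((1 + x ^ 2) * (1 + z ^ 2 * x ^ 2))) x := by
      intro x _
      have hden1 : (0:ℝ) < 1 + x ^ 2 := by positivity
      have hden2 : (0:ℝ) < 1 + z ^ 2 * x ^ 2 := by positivity
      have h := (((Real.hasDerivAt_arctan x).sub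
        ((hc_hasDerivAt_arctan_mul z x).const_mul z)).const_mul A)
      refine h.congr_deriv ?_
      rw [hA]
      field_simp
      ring
    have htends : Tendsto (fun l : ℝ => A * (Real.arctan l - z * Real.arctan (z * l))) atTop
        (nhds (A * (Real.pi / 2 - z * (Real.pi / 2)))) := by
      exact ((Real.tendsto_arctan_atTop.mono_right nhdsWithin_le_nhds).sub
        ((hc_tendsto_arctan_mul z hz).const_mul z)).const_mul A
    have := integral_Ioi_of_hasDerivAt_of_tendsto' hderiv
      (by simpa using hc_integrableOn_aux z hz 1) htends
    rw [this]
    rw [hA]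
    simp [Real.arctan_zero]
    field_simp
    ring

private lemma hc_I2 (z : ℝ) (hz : 0 < z) :
    ∫ l in Ioi (0:ℝ), 1 / ((1 + l ^ 2) * (1 + z ^ 2 * l ^ 2) ^ 2)
      = Real.pi * (2 + z) / (4 * (1 + z) ^ 2) := by
  rcases eq_or_ne z 1 with rfl | hz1
  · have hderiv : ∀ x ∈ Ici (0:ℝ),
        HasDerivAt (fun l : ℝ => 3 * Real.arctan l / 8 + 3 * (l / (1 + 1 ^ 2 * l ^ 2) ^ 1) / 8
            + (l / (1 + 1 ^ 2 * l ^ 2) ^ 2) / 4)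
          (1 / ((1 + x ^ 2) * (1 + 1 ^ 2 * x ^ 2) ^ 2)) x := by
      intro x _
      have hden : (0:ℝ) < 1 + x ^ 2 := by positivity
      have h := (((Real.hasDerivAt_arctan x).const_mul 3).div_const 8).add
        ((((hc_hasDerivAt_quot 1 x 1).const_mul 3).div_const 8).add
          ((hc_hasDerivAt_quot 1 x 2).div_const 4))
      convert h using 1
      · rfl
      · rfl
      · ext l; simp only [Pi.add_apply]; ring
      · field_simp
        ring
    have htends : Tendsto (fun l : ℝ => 3 * Real.arctan l / 8
          + 3 * (l / (1 + 1 ^ 2 * l ^ 2) ^ 1) / 8 + (l / (1 + 1 ^ 2 * l ^ 2) ^ 2) / 4) atTop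
        (nhds (3 * (Real.pi / 2) / 8 + 3 * (0:ℝ) / 8 + (0:ℝ) / 4)) := by
      exact ((((Real.tendsto_arctan_atTop.mono_right nhdsWithin_le_nhds).const_mul
        3).div_const 8).add
        (((hc_tendsto_frac 1 one_pos 1 le_rfl).const_mul 3).div_const 8)).add
        ((hc_tendsto_frac 1 one_pos 2 one_le_two).div_const 4)
    have := integral_Ioi_of_hasDerivAt_of_tendsto' hderiv
      (by simpa using hc_integrableOn_aux 1 one_pos 2) htends
    rw [this]
    norm_num [Real.arctan_zero]
    ring
  · set A : ℝ := 1 / (1 - z ^ 2) ^ 2 with hA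
    set C : ℝ := z ^ 2 / (z ^ 2 - 1) with hC
    have hz2 : (1:ℝ) - z ^ 2 ≠ 0 := by intro h; apply hz1; nlinarith
    have hz2' : z ^ 2 - (1:ℝ) ≠ 0 := by intro h; apply hz1; nlinarith
    have hderiv : ∀ x ∈ Ici (0:ℝ),
        HasDerivAt (fun l : ℝ => A * (Real.arctan l - z * Real.arctan (z * l))
            + C * (l / (1 + z ^ 2 * l ^ 2) ^ 1 / 2 + Real.arctan (z * l) / (2 * z)))
          (1 / ((1 + x ^ 2) * (1 + z ^ 2 * x ^ 2) ^ 2)) x := by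
      intro x _
      have hden1 : (0:ℝ) < 1 + x ^ 2 := by positivity
      have hden2 : (0:ℝ) < 1 + z ^ 2 * x ^ 2 := by positivity
      have h := (((Real.hasDerivAt_arctan x).sub
          ((hc_hasDerivAt_arctan_mul z x).const_mul z)).const_mul A).add
        (((((hc_hasDerivAt_quot z x 1).div_const 2).add
          ((hc_hasDerivAt_arctan_mul z x).div_const (2 * z)))).const_mul C)
      refine h.congr_deriv ?_
      rw [hA, hC]
      field_simp
      ring
    have htends : Tendsto (fun l : ℝ => A * (Real.arctan l - z * Real.arctan (z * l))
          + C * (l / (1 + z ^ 2 * l ^ 2) ^ 1 / 2 + Real.arctan (z * l) / (2 * z))) atTop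
        (nhds (A * (Real.pi / 2 - z * (Real.pi / 2))
          + C * ((0:ℝ) / 2 + (Real.pi / 2) / (2 * z)))) := by
      exact (((Real.tendsto_arctan_atTop.mono_right nhdsWithin_le_nhds).sub
        ((hc_tendsto_arctan_mul z hz).const_mul z)).const_mul A).add
        ((((hc_tendsto_frac z hz 1 le_rfl).div_const 2).add
          ((hc_tendsto_arctan_mul z hz).div_const (2 * z))).const_mul C)
    have := integral_Ioi_of_hasDerivAt_of_tendsto' hderiv
      (by simpa using hc_integrableOn_aux z hz 2) htends
    rw [this]
    rw [hA, hC]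
    simp [Real.arctan_zero]
    have h1z : (1:ℝ) + z ≠ 0 := by positivity
    field_simp
    ring

private lemma hc_mean (z : ℝ) (hz : 0 < z) :
    (∫ κ, κ ∂(Measure.map (fun l : ℝ => 1 / (1 + z ^ 2 * l ^ 2)) halfCauchy))
      = 1 / (1 + z) := by
  rw [hc_moment_eq z (fun κ => κ) measurable_id]
  have e : ∀ l : ℝ, (2 / (Real.pi * (1 + l ^ 2))) * (1 / (1 + z ^ 2 * l ^ 2))
      = (2 / Real.pi) * (1 / ((1 + l ^ 2) * (1 + z ^ 2 * l ^ 2))) := by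
    intro l
    have h1 : (0:ℝ) < 1 + l ^ 2 := by positivity
    have h2 : (0:ℝ) < 1 + z ^ 2 * l ^ 2 := by positivity
    have hπ := Real.pi_pos
    field_simp
  simp_rw [e]
  rw [MeasureTheory.integral_const_mul, hc_I1 z hz]
  have hπ := Real.pi_pos
  have h1z : (0:ℝ) < 1 + z := by linarith
  field_simp

private lemma hc_second (z : ℝ) (hz : 0 < z) :
    (∫ κ, κ ^ 2 ∂(Measure.map (fun l : ℝ => 1 / (1 + z ^ 2 * l ^ 2)) halfCauchy))
      = (2 + z) / (2 * (1 + z) ^ 2) := by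
  rw [hc_moment_eq z (fun κ => κ ^ 2) (by fun_prop)]
  have e : ∀ l : ℝ, (2 / (Real.pi * (1 + l ^ 2))) * ((1 / (1 + z ^ 2 * l ^ 2)) ^ 2)
      = (2 / Real.pi) * (1 / ((1 + l ^ 2) * (1 + z ^ 2 * l ^ 2) ^ 2)) := by
    intro l
    have h1 : (0:ℝ) < 1 + l ^ 2 := by positivity
    have h2 : (0:ℝ) < 1 + z ^ 2 * l ^ 2 := by positivity
    have hπ := Real.pi_pos
    field_simp
  simp_rw [e]
  rw [MeasureTheory.integral_const_mul, hc_I2 z hz]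
  have hπ := Real.pi_pos
  have h1z : (0:ℝ) < 1 + z := by linarith
  field_simp
  ring

end AuxHC

/-- If `λ ~ C⁺(0,1)` and `z > 0`, then `κ = 1/(1+z²λ²)` has density
`(1/π) z/((z²−1)κ+1) · 1/(√κ√(1−κ))` on `(0,1)`, with mean `1/(1+z)` and
variance `z/(2(1+z)²)`. -/
theorem halfCauchy_shrinkage_density_mean_var (z : ℝ) (hz : 0 < z) :
    (Measure.map (fun l : ℝ => 1 / (1 + z ^ 2 * l ^ 2)) halfCauchy
      = volume.withDensity (fun κ => ENNReal.ofReal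
          (if κ ∈ Set.Ioo (0 : ℝ) 1 then
            (1 / Real.pi) * z / ((z ^ 2 - 1) * κ + 1)
              * (1 / (Real.sqrt κ * Real.sqrt (1 - κ)))
          else 0)))
    ∧ (∫ κ, κ ∂(Measure.map (fun l : ℝ => 1 / (1 + z ^ 2 * l ^ 2)) halfCauchy))
        = 1 / (1 + z)
    ∧ (∫ κ, κ ^ 2 ∂(Measure.map (fun l : ℝ => 1 / (1 + z ^ 2 * l ^ 2)) halfCauchy))
        - (∫ κ, κ ∂(Measure.map (fun l : ℝ => 1 / (1 + z ^ 2 * l ^ 2)) halfCauchy)) ^ 2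
        = z / (2 * (1 + z) ^ 2) := by
  refine ⟨hc_part1 z hz, hc_mean z hz, ?_⟩
  rw [hc_second z hz, hc_mean z hz]
  have h1z : (0:ℝ) < 1 + z := by linarith
  field_simp
  ring
end
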